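/- For λ ≥ 0 and a point s_i with w · s_i < 0, the supremum over x ∈ R^n of (indicator of {w · x ≥ 0}) minus λ‖x - s_i‖₂ equals max(1 - λ·|w·s_i|/‖w‖₂, 0). -/

import Mathlib

open scoped RealInnerProductSpace

theorem psi_neg_case (n : ℕ) (w s : EuclideanSpace ℝ (Fin n)) (l : ℝ)
    (hw : w ≠ 0) (hl : 0 ≤ l) (hs : ⟪w, s⟫ < 0) :
    (⨆ x : EuclideanSpace ℝ (Fin n),
        ((if 0 ≤ ⟪w, x⟫ then (1 : ℝ) else 0) - l * ‖x - s‖)) =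
      max (1 - l * (|⟪w, s⟫| / ‖w‖)) 0 := by
  have hwn : (0:ℝ) < ‖w‖ := norm_pos_iff.mpr hw
  set c : ℝ := |⟪w, s⟫| / ‖w‖ with hc
  have habs : |⟪w, s⟫| = -⟪w, s⟫ := abs_of_neg hs
  have hub : ∀ x : EuclideanSpace ℝ (Fin n),
      ((if 0 ≤ ⟪w, x⟫ then (1:ℝ) else 0) - l * ‖x - s‖) ≤ max (1 - l * c) 0 := by
    intro x
    by_cases h : 0 ≤ ⟪w, x⟫
    · rw [if_pos h]
      have h1 : |⟪w, s⟫| ≤ ⟪w, x - s⟫ := by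
        rw [inner_sub_right, habs]; linarith
      have h2 : ⟪w, x - s⟫ ≤ ‖w‖ * ‖x - s‖ := real_inner_le_norm w (x - s)
      have h3 : c ≤ ‖x - s‖ := by
        rw [hc, div_le_iff₀ hwn]; nlinarith
      have h4 := mul_le_mul_of_nonneg_left h3 hl
      exact le_max_of_le_left (by linarith)
    · rw [if_neg h]
      have : 0 ≤ l * ‖x - s‖ := mul_nonneg hl (norm_nonneg _)
      exact le_max_of_le_right (by linarith)
  have hbdd : BddAbove (Set.range fun x : EuclideanSpace ℝ (Fin n) =>
      ((if 0 ≤ ⟪w, x⟫ then (1:ℝ) else 0) - l * ‖x - s‖)) :=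
    ⟨max (1 - l * c) 0, by rintro y ⟨x, rfl⟩; exact hub x⟩
  apply le_antisymm
  · exact ciSup_le hub
  · refine max_le ?_ ?_
    · set x₀ : EuclideanSpace ℝ (Fin n) := s - (⟪w, s⟫ / ‖w‖ ^ 2) • w with hx₀
      have hinner : ⟪w, x₀⟫ = 0 := by
        rw [hx₀, inner_sub_right, real_inner_smul_right, real_inner_self_eq_norm_sq]
        field_simp
        ring
      have hnorm : ‖x₀ - s‖ = c := by
        have : x₀ - s = -((⟪w, s⟫ / ‖w‖ ^ 2) • w) := by rw [hx₀]; abel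
        rw [this, norm_neg, norm_smul, Real.norm_eq_abs, abs_div, abs_pow, abs_norm,
          hc, habs]
        field_simp
      refine le_ciSup_of_le hbdd x₀ ?_
      rw [if_pos (le_of_eq hinner.symm), hnorm]
    · refine le_ciSup_of_le hbdd s ?_
      rw [if_neg (not_le.mpr hs)]
      simp
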